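/- Let G be a finite simple graph on vertex set V that is facet-inducing, and let M ⊆ V be a homogeneous set of G, i.e., a module of G with 2 ≤ |M| < |V|. Then the induced subgraph G[M] is facet-inducing. -/

import Mathlib

def IsStable {V : Type*} (G : SimpleGraph V) (S : Finset V) : Prop :=
  ∀ u ∈ S, ∀ w ∈ S, ¬ G.Adj u w

def MaxStable {V : Type*} (G : SimpleGraph V) (S : Finset V) : Prop :=
  IsStable G S ∧ ∀ T : Finset V, IsStable G T → S ⊆ T → S = T

noncomputable def incVec {V : Type*} (S : Finset V) : V → ℝ :=
  Set.indicator (↑S) 1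

def FacetInducing {V : Type*} (G : SimpleGraph V) : Prop :=
  ∃ c : V → ℝ,
    (∀ v, c v ≠ 0) ∧
    (∀ S : Finset V, IsStable G S → ∑ v ∈ S, c v ≤ 1) ∧
    ∃ S : Fin (Nat.card V) → Finset V,
      (∀ j, MaxStable G (S j)) ∧
      LinearIndependent ℝ (fun j => incVec (S j)) ∧
      ∀ j, ∑ v ∈ S j, c v = 1


theorem stmt1 {V : Type*} [Fintype V] (G : SimpleGraph V) (hfi : FacetInducing G)
    (M : Set V)
    (hmod : ∀ v ∉ M, (∀ m ∈ M, G.Adj v m) ∨ (∀ m ∈ M, ¬ G.Adj v m))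
    (h2 : 2 ≤ M.ncard) (hlt : M.ncard < Fintype.card V) :
    FacetInducing (G.induce M) := by
  classical
  obtain ⟨c, hc0, hle, S, hmax, hli, ht⟩ := hfi
  haveI : Fintype ↥M := Fintype.ofFinite _
  -- module fact: a vertex outside M nonadjacent to one vertex of M is nonadjacent to all
  have hA : ∀ s ∉ M, ∀ m ∈ M, ¬ G.Adj s m → ∀ m' ∈ M, ¬ G.Adj s m' := by
    intro s hs m hm hnadj m' hm'
    rcases hmod s hs with h | h
    · exact absurd (h m hm) hnadj
    · exact h m' hm'
  -- traces of the stable sets on M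
  have htr_stable : ∀ j, IsStable (G.induce M) ((S j).subtype (· ∈ M)) := by
    intro j u hu w hw hadj
    exact (hmax j).1 u.val (Finset.mem_subtype.1 hu) w.val (Finset.mem_subtype.1 hw) hadj
  have htr_max : ∀ j, ((S j).subtype (· ∈ M)).Nonempty →
      MaxStable (G.induce M) ((S j).subtype (· ∈ M)) := by
    intro j hne
    refine ⟨htr_stable j, ?_⟩
    intro T hT hsub
    apply Finset.Subset.antisymm hsub
    intro x hx
    rw [Finset.mem_subtype]
    by_contra hxS
    obtain ⟨m0, hm0⟩ := hne
    have hm0S : m0.val ∈ S j := Finset.mem_subtype.1 hm0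
    have hxall : ∀ s ∈ S j, ¬ G.Adj x.val s := by
      intro s hs
      by_cases hsM : s ∈ M
      · have hsT : (⟨s, hsM⟩ : ↥M) ∈ T := hsub (Finset.mem_subtype.2 hs)
        exact fun h => hT x hx ⟨s, hsM⟩ hsT h
      · intro h
        exact hA s hsM m0.val m0.2 ((hmax j).1 s hs m0.val hm0S) x.val x.2 h.symm
    have hstab : IsStable G (insert x.val (S j)) := by
      intro u hu w hw
      rcases Finset.mem_insert.1 hu with rfl | hu
      · rcases Finset.mem_insert.1 hw with rfl | hw
        · exact fun h => G.irrefl h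
        · exact hxall w hw
      · rcases Finset.mem_insert.1 hw with rfl | hw
        · exact fun h => hxall u hu h.symm
        · exact (hmax j).1 u hu w hw
    have heq := (hmax j).2 _ hstab (Finset.subset_insert _ _)
    exact hxS (by rw [heq]; exact Finset.mem_insert_self _ _)
  -- swap stability
  have hswap : ∀ j, ((S j).subtype (· ∈ M)).Nonempty → ∀ T : Finset V, (↑T : Set V) ⊆ M →
      IsStable G T → IsStable G ((S j).filter (fun v => v ∉ M) ∪ T) := by
    intro j hne T hTM hT u hu w hw hadj
    obtain ⟨m0, hm0⟩ := hne
    have hm0S : m0.val ∈ S j := Finset.mem_subtype.1 hm0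
    have key : ∀ a ∈ (S j).filter (fun v => v ∉ M), ∀ b ∈ T, ¬ G.Adj a b := by
      intro a ha b hb
      obtain ⟨haS, haM⟩ := Finset.mem_filter.1 ha
      exact hA a haM m0.val m0.2 ((hmax j).1 a haS m0.val hm0S) b (hTM hb)
    rcases Finset.mem_union.1 hu with hu | hu <;> rcases Finset.mem_union.1 hw with hw | hw
    · exact (hmax j).1 u (Finset.mem_filter.1 hu).1 w (Finset.mem_filter.1 hw).1 hadj
    · exact key u hu w hw hadj
    · exact key w hw u hu hadj.symm
    · exact hT u hu w hw hadj
  -- splitting the tight equalities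
  have hsplit : ∀ j, ∑ v ∈ (S j).filter (· ∈ M), c v
      + ∑ v ∈ (S j).filter (fun v => v ∉ M), c v = 1 := by
    intro j
    rw [Finset.sum_filter_add_sum_filter_not]
    exact ht j
  -- restriction map and spanning
  set R : (V → ℝ) →ₗ[ℝ] (↥M → ℝ) := LinearMap.funLeft ℝ ℝ Subtype.val with hR
  have hRinc : ∀ j, R (incVec (S j)) = incVec ((S j).subtype (· ∈ M)) := by
    intro j
    funext m
    by_cases h : m.val ∈ S j <;>
      simp [hR, LinearMap.funLeft_apply, incVec, Set.indicator_apply, h, Finset.mem_subtype]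
  have hspanV : Submodule.span ℝ (Set.range fun j => incVec (S j)) = ⊤ := by
    apply hli.span_eq_top_of_card_eq_finrank'
    rw [Fintype.card_fin, Module.finrank_fintype_fun_eq_card, Nat.card_eq_fintype_card]
  have hsurj : Function.Surjective R :=
    LinearMap.funLeft_surjective_of_injective ℝ ℝ _ Subtype.val_injective
  have hspanM : Submodule.span ℝ
      (Set.range fun j => incVec ((S j).subtype (· ∈ M))) = ⊤ := by
    have hfun : (fun j => incVec ((S j).subtype (· ∈ M)))
        = R ∘ (fun j => incVec (S j)) := funext fun j => (hRinc j).symm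
    rw [hfun, Set.range_comp, Submodule.span_image, hspanV, Submodule.map_top,
      LinearMap.range_eq_top.2 hsurj]
  -- extract a basis from the traces
  obtain ⟨b, hbsub, hbspan, hbli⟩ :=
    exists_linearIndependent ℝ (Set.range fun j => incVec ((S j).subtype (· ∈ M)))
  rw [hspanM] at hbspan
  let bas : Module.Basis b ℝ (↥M → ℝ) := Module.Basis.mk hbli (by rw [Subtype.range_coe]; exact hbspan.ge)
  haveI : Fintype b := FiniteDimensional.fintypeBasisIndex bas
  have hcardb : Fintype.card b = Nat.card ↥M := by
    rw [← Module.finrank_eq_card_basis bas, Module.finrank_fintype_fun_eq_card,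
      Nat.card_eq_fintype_card]
  let e : Fin (Nat.card ↥M) ≃ b := (Fintype.equivFinOfCardEq hcardb).symm
  choose idx hidx using fun x : b => Set.mem_range.1 (hbsub x.2)
  have hbne : ∀ x : b, ((S (idx x)).subtype (· ∈ M)).Nonempty := by
    intro x
    rw [Finset.nonempty_iff_ne_empty]
    intro h
    have hz : incVec ((S (idx x)).subtype (· ∈ M)) = 0 := by
      rw [h]; funext m; simp [incVec]
    exact hbli.ne_zero x ((hidx x).symm.trans hz)
  have hpos : 0 < Nat.card ↥M := by
    rw [Nat.card_coe_set_eq]; omega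
  set i0 : Fin (Nat.card ↥M) := ⟨0, hpos⟩ with hi0
  set j0 := idx (e i0) with hj0
  have hj0ne : ((S j0).subtype (· ∈ M)).Nonempty := hbne (e i0)
  set β := ∑ v ∈ (S j0).filter (· ∈ M), c v with hβ
  -- the trace value is constant among tight maximal stable sets with nonempty trace
  have key : ∀ j k, ((S j).subtype (· ∈ M)).Nonempty →
      ∑ v ∈ (S k).filter (· ∈ M), c v ≤ ∑ v ∈ (S j).filter (· ∈ M), c v := by
    intro j k hjne
    have hTstab : IsStable G ((S k).filter (· ∈ M)) := fun u hu w hw =>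
      (hmax k).1 u (Finset.mem_filter.1 hu).1 w (Finset.mem_filter.1 hw).1
    have hTsub : (↑((S k).filter (· ∈ M)) : Set V) ⊆ M := by
      intro v hv
      exact (Finset.mem_filter.1 (Finset.mem_coe.1 hv)).2
    have hstab := hswap j hjne _ hTsub hTstab
    have hdisj : Disjoint ((S j).filter (fun v => v ∉ M)) ((S k).filter (· ∈ M)) := by
      rw [Finset.disjoint_left]
      intro a ha hb
      exact (Finset.mem_filter.1 ha).2 (Finset.mem_filter.1 hb).2
    have h1 := hle _ hstab
    rw [Finset.sum_union hdisj] at h1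
    linarith [hsplit j]
  have hconst : ∀ j, ((S j).subtype (· ∈ M)).Nonempty →
      ∑ v ∈ (S j).filter (· ∈ M), c v = β := by
    intro j hne
    exact le_antisymm (key j0 j hj0ne) (key j j0 hne)
  have hβ0 : 0 ≤ β := by
    have hstab : IsStable G ((S j0).filter (fun v => v ∉ M)) := fun u hu w hw =>
      (hmax j0).1 u (Finset.mem_filter.1 hu).1 w (Finset.mem_filter.1 hw).1
    have h1 := hle _ hstab
    linarith [hsplit j0]
  -- β ≠ 0 via the linear functional g ↦ ∑ m, c m * g m
  have hβne : β ≠ 0 := by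
    intro hβz
    let φ : (↥M → ℝ) →ₗ[ℝ] ℝ :=
      { toFun := fun g => ∑ m, c m.val * g m
        map_add' := by
          intro g h
          simp [mul_add, Finset.sum_add_distrib]
        map_smul' := by
          intro r g
          simp only [smul_eq_mul, RingHom.id_apply, Pi.smul_apply]
          rw [Finset.mul_sum]
          exact Finset.sum_congr rfl fun m _ => by ring }
    have hval : ∀ T : Finset ↥M, φ (incVec T) = ∑ m ∈ T, c m.val := by
      intro T
      show (∑ m, c m.val * incVec T m) = _
      simp only [incVec, Set.indicator_apply, Finset.mem_coe, Pi.one_apply, mul_ite, mul_one,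
        mul_zero]
      rw [Finset.sum_ite_mem, Finset.univ_inter]
    have hφj : ∀ j, φ (incVec ((S j).subtype (· ∈ M))) = 0 := by
      intro j
      rw [hval]
      by_cases hne : ((S j).subtype (· ∈ M)).Nonempty
      · rw [Finset.sum_subtype_eq_sum_filter, hconst j hne]
        exact hβz
      · rw [Finset.not_nonempty_iff_eq_empty.1 hne, Finset.sum_empty]
    have hker : Submodule.span ℝ (Set.range fun j => incVec ((S j).subtype (· ∈ M)))
        ≤ LinearMap.ker φ := by
      rw [Submodule.span_le]
      rintro _ ⟨j, rfl⟩
      exact LinearMap.mem_ker.2 (hφj j)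
    rw [hspanM] at hker
    obtain ⟨m0, -⟩ := hj0ne
    set g : ↥M → ℝ := fun m => if m = m0 then 1 else 0 with hg
    have hz : φ g = 0 := LinearMap.mem_ker.1 (hker Submodule.mem_top)
    have hzz : c m0.val = 0 := by
      have heval : φ g = c m0.val := by
        show (∑ m, c m.val * g m) = c m0.val
        rw [Finset.sum_eq_single m0]
        · simp [hg]
        · intro m _ hm
          simp [hg, hm]
        · intro h
          exact absurd (Finset.mem_univ m0) h
      rw [← heval]
      exact hz
    exact hc0 m0.val hzz
  have hβpos : 0 < β := lt_of_le_of_ne hβ0 (Ne.symm hβne)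
  -- assemble
  refine ⟨fun m => c m.val / β, fun m => div_ne_zero (hc0 m.val) hβne, ?_, ?_⟩
  · -- validity for all stable sets of the induced graph
    intro T hT
    have hTV : IsStable G (T.map (Function.Embedding.subtype (· ∈ M))) := by
      intro u hu w hw
      obtain ⟨u', hu', rfl⟩ := Finset.mem_map.1 hu
      obtain ⟨w', hw', rfl⟩ := Finset.mem_map.1 hw
      exact hT u' hu' w' hw'
    have hTsub : (↑(T.map (Function.Embedding.subtype (· ∈ M))) : Set V) ⊆ M := by
      intro v hv
      obtain ⟨u', hu', rfl⟩ := Finset.mem_map.1 (Finset.mem_coe.1 hv)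
      exact u'.2
    have hstab := hswap j0 hj0ne _ hTsub hTV
    have hdisj : Disjoint ((S j0).filter (fun v => v ∉ M))
        (T.map (Function.Embedding.subtype (· ∈ M))) := by
      rw [Finset.disjoint_left]
      intro a ha hb
      obtain ⟨u', hu', rfl⟩ := Finset.mem_map.1 hb
      exact (Finset.mem_filter.1 ha).2 u'.2
    have h1 := hle _ hstab
    rw [Finset.sum_union hdisj] at h1
    have hmapsum : ∑ v ∈ T.map (Function.Embedding.subtype (· ∈ M)), c v
        = ∑ m ∈ T, c m.val := Finset.sum_map _ _ _
    have h2 : ∑ m ∈ T, c m.val ≤ β := by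
      rw [← hmapsum]
      linarith [hsplit j0]
    rw [← Finset.sum_div, div_le_one hβpos]
    exact h2
  · refine ⟨fun i => (S (idx (e i))).subtype (· ∈ M), fun i => htr_max _ (hbne (e i)), ?_, ?_⟩
    · have heq : (fun i => incVec ((S (idx (e i))).subtype (· ∈ M)))
          = (fun x : b => (x : ↥M → ℝ)) ∘ e := by
        funext i
        exact hidx (e i)
      rw [heq]
      exact hbli.comp e e.injective
    · intro i
      have hsum : ∑ m ∈ (S (idx (e i))).subtype (· ∈ M), c m.val = β := by
        rw [Finset.sum_subtype_eq_sum_filter]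
        exact hconst _ (hbne (e i))
      rw [← Finset.sum_div, hsum, div_self hβne]
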